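/- For any strictly increasing sequences 0 < x₁ < ... < x_m and 0 < y₁ < ... < y_m, the determinant det[exp(-x_i / y_j)]_{1≤i,j≤m} is strictly positive. -/

import Mathlib

open Matrix Finset

theorem expsum_zeros (n : ℕ) : ∀ (α c t : Fin n → ℝ), StrictMono α → StrictMono t →
    (∀ i, 0 < t i) → (∀ i, ∑ j, c j * (t i) ^ (α j) = 0) → c = 0 := by
  induction n with
  | zero => intro α c t _ _ _ _; funext i; exact i.elim0
  | succ n ih =>
    intro α c t hα ht ht0 hz
    set g : ℝ → ℝ := fun s => ∑ j, c j * s ^ (α j - α 0) with hg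
    have hgz : ∀ i, g (t i) = 0 := by
      intro i
      have h1 : g (t i) = (∑ j, c j * (t i) ^ (α j)) * (t i) ^ (-α 0) := by
        rw [Finset.sum_mul]
        refine Finset.sum_congr rfl fun j _ => ?_
        rw [mul_assoc, ← Real.rpow_add (ht0 i)]
        ring_nf
      rw [h1, hz i, zero_mul]
    set g' : ℝ → ℝ := fun s => ∑ j, c j * ((α j - α 0) * s ^ (α j - α 0 - 1)) with hg'
    have hderiv : ∀ s : ℝ, 0 < s → HasDerivAt g (g' s) s := by
      intro s hs
      exact HasDerivAt.fun_sum fun j _ =>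
        ((Real.hasDerivAt_rpow_const (Or.inl hs.ne')).const_mul (c j))
    have hroots : ∀ i : Fin n, ∃ u ∈ Set.Ioo (t i.castSucc) (t i.succ), g' u = 0 := by
      intro i
      refine exists_hasDerivAt_eq_zero (f := g) (f' := g') (ht (Fin.castSucc_lt_succ (i := i))) ?_ ?_ ?_
      · intro s hs
        have hs0 : 0 < s := lt_of_lt_of_le (ht0 _) hs.1
        exact ((hderiv s hs0).continuousAt).continuousWithinAt
      · rw [hgz, hgz]
      · intro u hu
        exact hderiv u (lt_trans (ht0 _) hu.1)
    choose u hu hu0 using hroots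
    have hu' : StrictMono u := by
      intro i i' hii'
      have h1 : u i < t i.succ := (hu i).2
      have h2 : t i'.castSucc < u i' := (hu i').1
      have h3 : t i.succ ≤ t i'.castSucc := by
        apply ht.monotone
        rw [Fin.le_def]
        simpa using hii'
      linarith
    have hupos : ∀ i, 0 < u i := fun i => lt_trans (ht0 _) (hu i).1
    have key : (fun j : Fin n => c j.succ * (α j.succ - α 0)) = 0 := by
      apply ih (fun j => α j.succ - α 0 - 1) _ u
      · intro a b hab
        have := hα (Fin.succ_lt_succ_iff.mpr hab)
        simpa using this
      · exact hu'
      · exact hupos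
      · intro i
        have h0 := hu0 i
        simp only [hg', Fin.sum_univ_succ] at h0
        simp only [sub_self, zero_mul, mul_zero, zero_add] at h0
        rw [← h0]
        refine Finset.sum_congr rfl fun j _ => ?_
        ring
    have hcs : ∀ j : Fin n, c j.succ = 0 := by
      intro j
      have h1 := congrFun key j
      have h2 : α 0 < α j.succ := hα (Fin.succ_pos j)
      have h3 : α j.succ - α 0 ≠ 0 := by linarith
      simpa [h3] using h1
    have hc0 : c 0 = 0 := by
      have h0 := hz 0
      rw [Fin.sum_univ_succ] at h0
      simp only [hcs, zero_mul, Finset.sum_const_zero, add_zero] at h0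
      have := Real.rpow_pos_of_pos (ht0 0) (α 0)
      rcases mul_eq_zero.mp h0 with h | h
      · exact h
      · exact absurd h this.ne'
    funext j
    rcases Fin.eq_zero_or_eq_succ j with h | ⟨k, hk⟩
    · rw [h]; exact hc0
    · rw [hk]; exact hcs k

theorem genVandermonde_det_ne_zero (n : ℕ) (b e : Fin n → ℝ) (hb0 : ∀ i, 0 < b i)
    (hb : StrictMono b) (he : StrictMono e) :
    Matrix.det (Matrix.of fun i j => (b i) ^ (e j)) ≠ 0 := by
  intro h
  obtain ⟨v, hv, hv0⟩ := Matrix.exists_mulVec_eq_zero_iff.mpr h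
  apply hv
  apply expsum_zeros n e v b he hb hb0
  intro i
  have h1 := congrFun hv0 i
  simp only [Matrix.mulVec, dotProduct, Matrix.of_apply, Pi.zero_apply] at h1
  rw [← h1]
  exact Finset.sum_congr rfl fun j _ => mul_comm _ _

theorem genVandermonde_det_pos (n : ℕ) (b e : Fin n → ℝ) (hb0 : ∀ i, 0 < b i)
    (hb : StrictMono b) (he : StrictMono e) :
    0 < Matrix.det (Matrix.of fun i j => (b i) ^ (e j)) := by
  set F : ℝ → ℝ := fun s =>
    Matrix.det (Matrix.of fun i j : Fin n => (b i) ^ ((1-s) * e j + s * (j:ℝ))) with hF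
  have hFcont : Continuous F := by
    apply Continuous.matrix_det
    apply continuous_matrix
    intro i j
    have h1 : (fun s : ℝ => (Matrix.of fun i j : Fin n => (b i) ^ ((1-s) * e j + s * (j:ℝ))) i j) =
        fun s => Real.exp (Real.log (b i) * ((1-s) * e j + s * (j:ℝ))) := by
      funext s
      simp only [Matrix.of_apply]
      rw [Real.rpow_def_of_pos (hb0 i)]
    rw [h1]
    fun_prop
  have hFne : ∀ s ∈ Set.Icc (0:ℝ) 1, F s ≠ 0 := by
    intro s hs
    apply genVandermonde_det_ne_zero n b _ hb0 hb
    intro j k hjk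
    simp only
    have h2 : s * (j:ℝ) ≤ s * (k:ℝ) := by
      apply mul_le_mul_of_nonneg_left _ hs.1
      exact_mod_cast hjk.le
    rcases lt_or_eq_of_le hs.2 with h | h
    · have h1 : (1-s) * e j < (1-s) * e k := by
        apply mul_lt_mul_of_pos_left (he hjk) (by linarith)
      linarith
    · have h2' : s * (j:ℝ) < s * (k:ℝ) := by
        rw [h]
        have hjk' : (j:ℝ) < (k:ℝ) := by exact_mod_cast hjk
        linarith
      have h1 : (1-s) * e j ≤ (1-s) * e k := by
        rw [← h]; simp
      linarith
  have hF1 : 0 < F 1 := by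
    have h1 : F 1 = Matrix.det (Matrix.vandermonde b) := by
      have hm : (Matrix.of fun i j : Fin n => (b i) ^ ((1-(1:ℝ)) * e j + (1:ℝ) * (j:ℝ)))
          = Matrix.vandermonde b := by
        ext i j
        simp only [Matrix.of_apply, Matrix.vandermonde_apply]
        rw [← Real.rpow_natCast (b i) j]
        norm_num
      rw [hF]
      simp only
      rw [hm]
    rw [h1, Matrix.det_vandermonde]
    apply Finset.prod_pos
    intro i _
    apply Finset.prod_pos
    intro j hj
    rw [Finset.mem_Ioi] at hj
    exact sub_pos.mpr (hb hj)
  have hF0eq : F 0 = Matrix.det (Matrix.of fun i j => (b i) ^ (e j)) := by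
    rw [hF]
    simp
  rcases lt_trichotomy (F 0) 0 with h | h | h
  · exfalso
    have hmem : (0:ℝ) ∈ Set.Icc (F 0) (F 1) := ⟨h.le, hF1.le⟩
    obtain ⟨s, hs, hs0⟩ := intermediate_value_Icc zero_le_one hFcont.continuousOn hmem
    exact (hFne s hs) hs0
  · exact absurd h (hFne 0 ⟨le_refl _, zero_le_one⟩)
  · rwa [hF0eq] at h

theorem exp_neg_div_kernel_strictly_totally_positive (m : ℕ) (x y : Fin m → ℝ)
    (hx0 : ∀ i, 0 < x i) (hy0 : ∀ j, 0 < y j)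
    (hx : StrictMono x) (hy : StrictMono y) :
    0 < Matrix.det (Matrix.of fun i j => Real.exp (-(x i) / y j)) := by
  set b : Fin m → ℝ := fun i => Real.exp (-(x (Fin.rev i))) with hb
  set e : Fin m → ℝ := fun j => 1 / y (Fin.rev j) with he
  have hb0 : ∀ i, 0 < b i := fun i => Real.exp_pos _
  have hbmono : StrictMono b := by
    intro i i' hii'
    apply Real.exp_lt_exp.mpr
    apply neg_lt_neg
    exact hx (Fin.rev_lt_rev.mpr hii')
  have hemono : StrictMono e := by
    intro j j' hjj'
    apply one_div_lt_one_div_of_lt (hy0 _)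
    exact hy (Fin.rev_lt_rev.mpr hjj')
  have key := genVandermonde_det_pos m b e hb0 hbmono hemono
  have hsub : (Matrix.of fun i j : Fin m => (b i) ^ (e j)).submatrix Fin.rev Fin.rev
      = Matrix.of fun i j => Real.exp (-(x i) / y j) := by
    ext i j
    simp only [Matrix.submatrix_apply, Matrix.of_apply, hb, he, Fin.rev_rev]
    rw [Real.rpow_def_of_pos (Real.exp_pos _), Real.log_exp]
    congr 1
    field_simp
  rw [← hsub]
  rw [show (Fin.rev : Fin m → Fin m) = ⇑(Fin.revPerm) from rfl,
    Matrix.det_submatrix_equiv_self]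
  exact key
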